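/- For x ≥ 0, fixed δ > 0, D > 0, d ≥ 1, define y(η) = √(η²/4 + η²x²/(δ²−η²)) for 0 < η < δ. If additionally η ≤ δ − x²δ/(32dD²) and x ≤ 2√d·D, then the derivative dy/dη satisfies 0 ≤ dy/dη ≤ 1/2 + 32^{3/2}D³d^{3/2}/(δx²). -/

import Mathlib

open Real

set_option maxHeartbeats 1000000 in
/-- Let `y(η) = √(η²/4 + η²x²/(δ²-η²))` for `0 < η < δ`. If moreover
`η ≤ δ - x²δ/(32dD²)` and `x ≤ 2√d·D`, then
`0 ≤ y'(η) ≤ 1/2 + 32^{3/2}·D³·d^{3/2}/(δx²)`. -/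
theorem stmt11 (d : ℕ) (hd : 1 ≤ d) (x δ D : ℝ) (hx : 0 ≤ x) (hδ : 0 < δ) (hD : 0 < D)
    (η : ℝ) (hη0 : 0 < η) (hηδ : η < δ)
    (hη2 : η ≤ δ - x ^ 2 * δ / (32 * d * D ^ 2))
    (hx2 : x ≤ 2 * Real.sqrt d * D) :
    0 ≤ deriv (fun t => Real.sqrt (t ^ 2 / 4 + t ^ 2 * x ^ 2 / (δ ^ 2 - t ^ 2))) η ∧
    deriv (fun t => Real.sqrt (t ^ 2 / 4 + t ^ 2 * x ^ 2 / (δ ^ 2 - t ^ 2))) η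
      ≤ 1 / 2 + 32 ^ ((3 : ℝ) / 2) * D ^ 3 * (d : ℝ) ^ ((3 : ℝ) / 2) / (δ * x ^ 2) := by
  have hdp : (0:ℝ) < d := by exact_mod_cast Nat.lt_of_lt_of_le Nat.zero_lt_one hd
  have hA : (0:ℝ) < δ ^ 2 - η ^ 2 := by nlinarith
  set A : ℝ := δ ^ 2 - η ^ 2 with hAdef
  -- derivative of the inner function
  have hp : HasDerivAt (fun t : ℝ => t ^ 2) (2 * η) η := by
    simpa using hasDerivAt_pow 2 η
  have hden : HasDerivAt (fun t : ℝ => δ ^ 2 - t ^ 2) (-(2 * η)) η := by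
    exact ((hasDerivAt_const η (δ^2)).sub hp).congr_deriv (by ring)
  have hq : HasDerivAt (fun t : ℝ => t ^ 2 * x ^ 2 / (δ ^ 2 - t ^ 2))
      ((2 * η * x ^ 2 * (δ ^ 2 - η ^ 2) - η ^ 2 * x ^ 2 * (-(2 * η))) / (δ ^ 2 - η ^ 2) ^ 2) η :=
    (hp.mul_const _).div hden hA.ne'
  have hf : HasDerivAt (fun t : ℝ => t ^ 2 / 4 + t ^ 2 * x ^ 2 / (δ ^ 2 - t ^ 2))
      (η / 2 + 2 * η * x ^ 2 * δ ^ 2 / A ^ 2) η := by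
    refine ((hp.div_const 4).add hq).congr_deriv ?_
    rw [hAdef]
    field_simp [hA.ne']
    ring
  have hfpos : 0 < η ^ 2 / 4 + η ^ 2 * x ^ 2 / (δ ^ 2 - η ^ 2) := by
    have : 0 ≤ η ^ 2 * x ^ 2 / (δ ^ 2 - η ^ 2) := by positivity
    nlinarith
  have hsq : HasDerivAt (fun t => Real.sqrt (t ^ 2 / 4 + t ^ 2 * x ^ 2 / (δ ^ 2 - t ^ 2)))
      ((η / 2 + 2 * η * x ^ 2 * δ ^ 2 / A ^ 2) /
        (2 * Real.sqrt (η ^ 2 / 4 + η ^ 2 * x ^ 2 / (δ ^ 2 - η ^ 2)))) η :=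
    hf.sqrt hfpos.ne'
  -- closed form of √(f η)
  have hsA : (0:ℝ) < Real.sqrt A := Real.sqrt_pos.mpr hA
  have hs : (0:ℝ) < Real.sqrt (A + 4 * x ^ 2) := Real.sqrt_pos.mpr (by nlinarith)
  have hfeq : η ^ 2 / 4 + η ^ 2 * x ^ 2 / (δ ^ 2 - η ^ 2)
      = (η * Real.sqrt (A + 4 * x ^ 2) / (2 * Real.sqrt A)) ^ 2 := by
    rw [div_pow, mul_pow, mul_pow, Real.sq_sqrt (by nlinarith : (0:ℝ) ≤ A + 4 * x ^ 2),
      Real.sq_sqrt hA.le, hAdef]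
    field_simp [show δ ^ 2 - η ^ 2 ≠ 0 from hA.ne']
    ring
  have hsqrtf : Real.sqrt (η ^ 2 / 4 + η ^ 2 * x ^ 2 / (δ ^ 2 - η ^ 2))
      = η * Real.sqrt (A + 4 * x ^ 2) / (2 * Real.sqrt A) := by
    rw [hfeq, Real.sqrt_sq (by positivity)]
  have hderiv : deriv (fun t => Real.sqrt (t ^ 2 / 4 + t ^ 2 * x ^ 2 / (δ ^ 2 - t ^ 2))) η
      = (1 / 2 + 2 * x ^ 2 * δ ^ 2 / A ^ 2) * Real.sqrt A / Real.sqrt (A + 4 * x ^ 2) := by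
    rw [hsq.deriv, hsqrtf]
    field_simp
  rw [hderiv]
  constructor
  · positivity
  · -- upper bound
    have hsplit : (1 / 2 + 2 * x ^ 2 * δ ^ 2 / A ^ 2) * Real.sqrt A / Real.sqrt (A + 4 * x ^ 2)
        = (1/2) * (Real.sqrt A / Real.sqrt (A + 4 * x ^ 2))
          + (2 * x ^ 2 * δ ^ 2 / A ^ 2) * Real.sqrt A / Real.sqrt (A + 4 * x ^ 2) := by
      ring
    rw [hsplit]
    have h1 : (1/2) * (Real.sqrt A / Real.sqrt (A + 4 * x ^ 2)) ≤ 1/2 := by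
      have : Real.sqrt A / Real.sqrt (A + 4 * x ^ 2) ≤ 1 := by
        rw [div_le_one hs]
        exact Real.sqrt_le_sqrt (by nlinarith)
      linarith
    have hrpow : (32:ℝ) ^ ((3:ℝ)/2) * D ^ 3 * (d : ℝ) ^ ((3 : ℝ) / 2)
        = 32 * Real.sqrt 32 * D ^ 3 * (d * Real.sqrt d) := by
      rw [show (3:ℝ)/2 = 1 + 1/2 by norm_num, Real.rpow_add (by norm_num), Real.rpow_add hdp,
        Real.rpow_one, Real.rpow_one, ← Real.sqrt_eq_rpow, ← Real.sqrt_eq_rpow]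
    have h2 : (2 * x ^ 2 * δ ^ 2 / A ^ 2) * Real.sqrt A / Real.sqrt (A + 4 * x ^ 2)
        ≤ 32 ^ ((3 : ℝ) / 2) * D ^ 3 * (d : ℝ) ^ ((3 : ℝ) / 2) / (δ * x ^ 2) := by
      rcases eq_or_lt_of_le hx with hx0 | hx0
      · rw [← hx0]
        simp
      · -- x > 0
        have hs2x : 2 * x ≤ Real.sqrt (A + 4 * x ^ 2) := by
          rw [show 2 * x = Real.sqrt ((2*x)^2) by rw [Real.sqrt_sq (by linarith)]]
          exact Real.sqrt_le_sqrt (by nlinarith)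
        have step1 : (2 * x ^ 2 * δ ^ 2 / A ^ 2) * Real.sqrt A / Real.sqrt (A + 4 * x ^ 2)
            ≤ (2 * x ^ 2 * δ ^ 2 / A ^ 2) * Real.sqrt A / (2 * x) :=
          div_le_div_of_nonneg_left (by positivity) (by linarith) hs2x
        refine step1.trans ?_
        rw [hrpow]
        set m : ℝ := x ^ 2 * δ ^ 2 / (32 * d * D ^ 2) with hm
        have hm0 : 0 < m := by positivity
        have hmA : m ≤ A := by
          have h32 : (0:ℝ) < 32 * d * D ^ 2 := by positivity
          have hgap : x ^ 2 * δ / (32 * d * D ^ 2) ≤ δ - η := by linarith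
          rw [hAdef, hm]
          calc x ^ 2 * δ ^ 2 / (32 * d * D ^ 2) = (x ^ 2 * δ / (32 * d * D ^ 2)) * δ := by ring
            _ ≤ (δ - η) * (δ + η) := by
                apply mul_le_mul hgap (by linarith) hδ.le
                nlinarith [div_nonneg (by positivity : (0:ℝ) ≤ x^2*δ) h32.le]
            _ = δ ^ 2 - η ^ 2 := by ring
        have h32s : Real.sqrt 32 ^ 2 = 32 := Real.sq_sqrt (by norm_num)
        have hds : Real.sqrt (d:ℝ) ^ 2 = d := Real.sq_sqrt hdp.le
        have hms : Real.sqrt m ^ 2 = m := Real.sq_sqrt hm0.le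
        have hkey : x ^ 3 * δ ^ 3
            ≤ 32 * Real.sqrt 32 * D ^ 3 * (d * Real.sqrt d) * (A * Real.sqrt A) := by
          have hsq1 : (32 * Real.sqrt 32 * D ^ 3 * ((d:ℝ) * Real.sqrt d) * (m * Real.sqrt m)) ^ 2
              = 32 ^ 3 * D ^ 6 * (d:ℝ) ^ 3 * m ^ 3 := by
            linear_combination (32^2*D^6*(d:ℝ)^2*m^2*(Real.sqrt (d:ℝ))^2*(Real.sqrt m)^2) * h32s
              + (32^3*D^6*(d:ℝ)^2*m^2*(Real.sqrt m)^2) * hds + (32^3*D^6*(d:ℝ)^3*m^2) * hms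
          have hsqeq : (x ^ 3 * δ ^ 3) ^ 2
              = (32 * Real.sqrt 32 * D ^ 3 * ((d:ℝ) * Real.sqrt d) * (m * Real.sqrt m)) ^ 2 := by
            rw [hsq1, hm]
            field_simp
          have heq : x ^ 3 * δ ^ 3
              = 32 * Real.sqrt 32 * D ^ 3 * ((d:ℝ) * Real.sqrt d) * (m * Real.sqrt m) := by
            have e1 : x ^ 3 * δ ^ 3 = Real.sqrt ((x ^ 3 * δ ^ 3) ^ 2) :=
              (Real.sqrt_sq (by positivity)).symm
            rw [e1, hsqeq, Real.sqrt_sq (by positivity)]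
          rw [heq]
          have hmono : m * Real.sqrt m ≤ A * Real.sqrt A :=
            mul_le_mul hmA (Real.sqrt_le_sqrt hmA) (Real.sqrt_nonneg _) hA.le
          exact mul_le_mul_of_nonneg_left hmono (by positivity)
        rw [div_le_div_iff₀ (by positivity) (by positivity)]
        have hAsq : A ^ 2 = A * Real.sqrt A * Real.sqrt A := by
          linear_combination (-A) * Real.mul_self_sqrt hA.le
        calc 2 * x ^ 2 * δ ^ 2 / A ^ 2 * Real.sqrt A * (δ * x ^ 2)
            = (x ^ 3 * δ ^ 3) * (2 * x * Real.sqrt A) / A ^ 2 := by ring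
          _ ≤ (32 * Real.sqrt 32 * D ^ 3 * ((d:ℝ) * Real.sqrt d) * (A * Real.sqrt A))
                * (2 * x * Real.sqrt A) / A ^ 2 := by
              gcongr
          _ = 32 * Real.sqrt 32 * D ^ 3 * ((d:ℝ) * Real.sqrt d) * (2 * x)
                * (A * Real.sqrt A * Real.sqrt A) / A ^ 2 := by
              ring
          _ = 32 * Real.sqrt 32 * D ^ 3 * ((d:ℝ) * Real.sqrt d) * (2 * x) := by
              rw [← hAsq]
              field_simp
    linarith
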